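/- Let $(\mathcal{D}_v, \mu_v)$ be a probability space, $\{\Phi_{v,h}\}_{h}$ an orthonormal family with uniform bound $B_v \geq 1$, $g = \sum_{h \in \tilde{I}} \hat{g}_h \Phi_{v,h} \not\equiv 0$ with $\tilde{I}$ finite, and $\Psi$ a bounded measurable function with $\|\Psi\|_{L_1} < \delta_\Psi$. Let $X$ be a random vector distributed according to $\mu_v$. If $\max_{h \in \tilde{I}} |\hat{g}_h| > B_v(\delta_+ + \delta_\Psi)$ for some $\delta_+ > 0$, then $\mathbb{P}(|(g + \Psi)(X)| < \delta_+) \leq 1 - \frac{B_v^{-1} \max_{h \in \tilde{I}} |\hat{g}_h| - \delta_\Psi - \delta_+}{B_v \sum_{h \in \tilde{I}} |\hat{g}_h| + \|\Psi\|_{L_\infty}}$, and this bound is strictly less than $1$. -/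

import Mathlib

open MeasureTheory

/-- Lemma (trig_prob), single-sample version: for `g = ∑_{h∈s} c h • Φ h ≠ 0`
built from an orthonormal family bounded by `B ≥ 1`, and a bounded perturbation
`Ψ` with `‖Ψ‖_{L¹} < δΨ`, if `max_h |c h| > B (δ₊ + δΨ)` then the probability
(w.r.t. a `μ`-distributed sample) that `|(g+Ψ)(X)| < δ₊` is at most
`q := 1 - (B⁻¹ max_h |c h| - δΨ - δ₊)/(B ∑_h |c h| + ‖Ψ‖_∞)`, and `q < 1`. -/
theorem stmt3
    {D : Type*} [MeasurableSpace D] {μ : Measure D} [IsProbabilityMeasure μ]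
    {ι : Type*} [DecidableEq ι] (s : Finset ι) (hs : s.Nonempty)
    (Φ : ι → D → ℂ) (c : ι → ℂ) (B : ℝ) (hB : 1 ≤ B)
    (hmeas : ∀ h ∈ s, Measurable (Φ h))
    (hΦ : ∀ h ∈ s, ∀ᵐ x ∂μ, ‖Φ h x‖ ≤ B)
    (hortho : ∀ h₁ ∈ s, ∀ h₂ ∈ s,
      (∫ x, Φ h₁ x * (starRingEnd ℂ) (Φ h₂ x) ∂μ) = if h₁ = h₂ then 1 else 0)
    (Ψ : D → ℂ) (hΨmeas : Measurable Ψ) (hΨbdd : MemLp Ψ ⊤ μ)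
    (δΨ δplus : ℝ) (hδΨ : 0 < δΨ) (hδplus : 0 < δplus)
    (hΨ1 : (∫ x, ‖Ψ x‖ ∂μ) < δΨ)
    (hmax : B * (δplus + δΨ) < s.sup' hs fun h => ‖c h‖) :
    (μ {x | ‖(∑ h ∈ s, c h * Φ h x) + Ψ x‖ < δplus}).toReal
        ≤ 1 - (B⁻¹ * (s.sup' hs fun h => ‖c h‖) - δΨ - δplus)
            / (B * (∑ h ∈ s, ‖c h‖) + (eLpNorm Ψ ⊤ μ).toReal)
      ∧ 1 - (B⁻¹ * (s.sup' hs fun h => ‖c h‖) - δΨ - δplus)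
            / (B * (∑ h ∈ s, ‖c h‖) + (eLpNorm Ψ ⊤ μ).toReal) < 1 := by
  have hBpos : (0:ℝ) < B := lt_of_lt_of_le one_pos hB
  set M : ℝ := s.sup' hs fun h => ‖c h‖ with hM
  set S : ℝ := ∑ h ∈ s, ‖c h‖ with hS
  set N : ℝ := (eLpNorm Ψ ⊤ μ).toReal with hN
  set g : D → ℂ := fun x => ∑ h ∈ s, c h * Φ h x with hg
  set f : D → ℂ := fun x => g x + Ψ x with hf
  set A : Set D := {x | ‖f x‖ < δplus} with hA
  -- basic positivity facts
  have hMpos : 0 < M := lt_trans (by positivity) hmax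
  have hMS : M ≤ S := by
    apply Finset.sup'_le
    intro h hh
    exact Finset.single_le_sum (f := fun h => ‖c h‖) (fun i _ => norm_nonneg _) hh
  have hN0 : 0 ≤ N := ENNReal.toReal_nonneg
  have hDpos : 0 < B * S + N := by nlinarith
  have hnum : 0 < B⁻¹ * M - δΨ - δplus := by
    have := mul_lt_mul_of_pos_left hmax (inv_pos.2 hBpos)
    rw [← mul_assoc, inv_mul_cancel₀ (ne_of_gt hBpos), one_mul] at this
    linarith
  -- measurability
  have hgmeas : Measurable g := by
    apply Finset.measurable_sum
    intro h hh
    exact (hmeas h hh).const_mul (c h)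
  have hfmeas : Measurable f := hgmeas.add hΨmeas
  have hAmeas : MeasurableSet A := measurableSet_lt hfmeas.norm measurable_const
  -- a.e. bounds
  have hΦall : ∀ᵐ x ∂μ, ∀ h ∈ s, ‖Φ h x‖ ≤ B := by
    exact (ae_ball_iff s.countable_toSet).2 fun h hh => hΦ h hh
  have hgbdd : ∀ᵐ x ∂μ, ‖g x‖ ≤ B * S := by
    filter_upwards [hΦall] with x hx
    calc ‖g x‖ ≤ ∑ h ∈ s, ‖c h * Φ h x‖ := norm_sum_le _ _
      _ ≤ ∑ h ∈ s, ‖c h‖ * B := by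
          apply Finset.sum_le_sum
          intro h hh
          rw [norm_mul]
          exact mul_le_mul_of_nonneg_left (hx h hh) (norm_nonneg _)
      _ = B * S := by rw [← Finset.sum_mul, mul_comm]
  have hΨfin : eLpNorm Ψ ⊤ μ ≠ ⊤ := ne_of_lt hΨbdd.2
  have hΨbdd_ae : ∀ᵐ x ∂μ, ‖Ψ x‖ ≤ N := by
    have h1 : ∀ᵐ x ∂μ, (‖Ψ x‖₊ : ENNReal) ≤ eLpNormEssSup Ψ μ := ae_le_eLpNormEssSup
    filter_upwards [h1] with x hx
    have : ((‖Ψ x‖₊ : ENNReal)).toReal ≤ (eLpNormEssSup Ψ μ).toReal :=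
      ENNReal.toReal_mono (by rwa [eLpNorm_exponent_top] at hΨfin) hx
    simpa [hN, eLpNorm_exponent_top] using this
  have hfbdd : ∀ᵐ x ∂μ, ‖f x‖ ≤ B * S + N := by
    filter_upwards [hgbdd, hΨbdd_ae] with x h1 h2
    calc ‖f x‖ ≤ ‖g x‖ + ‖Ψ x‖ := norm_add_le _ _
      _ ≤ B * S + N := add_le_add h1 h2
  -- integrability
  have hgint : Integrable g μ :=
    ⟨hgmeas.aestronglyMeasurable, HasFiniteIntegral.of_bounded hgbdd⟩
  have hΨint : Integrable Ψ μ := hΨbdd.integrable le_top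
  have hfint : Integrable f μ := hgint.add hΨint
  -- the key lower bound on the max coefficient
  obtain ⟨h₀, hh₀, hMh₀⟩ := Finset.exists_mem_eq_sup' hs fun h => ‖c h‖
  have hprod_int : ∀ h ∈ s, Integrable (fun x => c h * Φ h x * (starRingEnd ℂ) (Φ h₀ x)) μ := by
    intro h hh
    refine ⟨(((hmeas h hh).const_mul _).mul (continuous_star.measurable.comp (hmeas h₀ hh₀))).aestronglyMeasurable,
      HasFiniteIntegral.of_bounded (C := ‖c h‖ * B * B) ?_⟩
    filter_upwards [hΦ h hh, hΦ h₀ hh₀] with x h1 h2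
    calc ‖c h * Φ h x * (starRingEnd ℂ) (Φ h₀ x)‖
        = ‖c h‖ * ‖Φ h x‖ * ‖Φ h₀ x‖ := by simp [norm_mul]
      _ ≤ ‖c h‖ * B * B := by
          have hB0 : (0:ℝ) ≤ B := le_of_lt hBpos
          exact mul_le_mul (mul_le_mul le_rfl h1 (norm_nonneg _) (norm_nonneg _)) h2
            (norm_nonneg _) (by positivity)
  have hkey : (∫ x, g x * (starRingEnd ℂ) (Φ h₀ x) ∂μ) = c h₀ := by
    have : (fun x => g x * (starRingEnd ℂ) (Φ h₀ x))
        = fun x => ∑ h ∈ s, c h * Φ h x * (starRingEnd ℂ) (Φ h₀ x) := by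
      funext x; rw [hg]; rw [Finset.sum_mul]
    rw [this, integral_finset_sum s hprod_int]
    have : ∀ h ∈ s, (∫ x, c h * Φ h x * (starRingEnd ℂ) (Φ h₀ x) ∂μ)
        = c h * (if h = h₀ then 1 else 0) := by
      intro h hh
      rw [← hortho h hh h₀ hh₀, ← integral_const_mul]
      congr 1; funext x; ring
    rw [Finset.sum_congr rfl this]
    simp [mul_ite, hh₀]
  -- g * conj Φh₀ integrable
  have hgΦint : Integrable (fun x => g x * (starRingEnd ℂ) (Φ h₀ x)) μ := by
    have : (fun x => g x * (starRingEnd ℂ) (Φ h₀ x))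
        = fun x => ∑ h ∈ s, c h * Φ h x * (starRingEnd ℂ) (Φ h₀ x) := by
      funext x; rw [hg]; rw [Finset.sum_mul]
    rw [this]; exact integrable_finset_sum s hprod_int
  have hMle : M ≤ B * ∫ x, ‖g x‖ ∂μ := by
    rw [hM, hMh₀]
    calc ‖c h₀‖ = ‖∫ x, g x * (starRingEnd ℂ) (Φ h₀ x) ∂μ‖ := by rw [hkey]
      _ ≤ ∫ x, ‖g x * (starRingEnd ℂ) (Φ h₀ x)‖ ∂μ := norm_integral_le_integral_norm _
      _ ≤ ∫ x, ‖g x‖ * B ∂μ := by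
          apply integral_mono_ae hgΦint.norm (hgint.norm.mul_const B)
          filter_upwards [hΦ h₀ hh₀] with x hx
          rw [norm_mul, RingHomIsometric.norm_map]
          exact mul_le_mul_of_nonneg_left hx (norm_nonneg _)
      _ = B * ∫ x, ‖g x‖ ∂μ := by rw [integral_mul_const]; ring
  have hgle : (∫ x, ‖g x‖ ∂μ) ≤ (∫ x, ‖f x‖ ∂μ) + δΨ := by
    have h1 : (∫ x, ‖g x‖ ∂μ) ≤ ∫ x, ‖f x‖ + ‖Ψ x‖ ∂μ := by
      apply integral_mono hgint.norm (hfint.norm.add hΨint.norm)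
      intro x
      calc ‖g x‖ = ‖f x - Ψ x‖ := by rw [hf]; ring_nf
        _ ≤ ‖f x‖ + ‖Ψ x‖ := norm_sub_le _ _
    rw [integral_add hfint.norm hΨint.norm] at h1
    linarith
  -- split the integral of ‖f‖
  have hfsplit : (∫ x, ‖f x‖ ∂μ) ≤ δplus + (μ Aᶜ).toReal * (B * S + N) := by
    have hsplit := integral_add_compl hAmeas hfint.norm
    have h1 : (∫ x in A, ‖f x‖ ∂μ) ≤ δplus := by
      calc (∫ x in A, ‖f x‖ ∂μ) ≤ ∫ _ in A, δplus ∂μ := by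
            apply setIntegral_mono_on (hfint.norm.integrableOn) (integrableOn_const (measure_ne_top μ A)) hAmeas
            intro x hx; exact le_of_lt hx
        _ = (μ A).toReal * δplus := by rw [setIntegral_const]; simp [smul_eq_mul, Measure.real]
        _ ≤ 1 * δplus := by
            apply mul_le_mul_of_nonneg_right _ (le_of_lt hδplus)
            simpa using ENNReal.toReal_mono ENNReal.one_ne_top prob_le_one
        _ = δplus := one_mul _
    have h2 : (∫ x in Aᶜ, ‖f x‖ ∂μ) ≤ (μ Aᶜ).toReal * (B * S + N) := by
      calc (∫ x in Aᶜ, ‖f x‖ ∂μ) ≤ ∫ _ in Aᶜ, (B * S + N) ∂μ := by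
            apply setIntegral_mono_ae_restrict (hfint.norm.integrableOn)
              (integrableOn_const (measure_ne_top μ _))
            exact ae_restrict_of_ae hfbdd
        _ = (μ Aᶜ).toReal * (B * S + N) := by rw [setIntegral_const]; simp [smul_eq_mul, Measure.real]
    linarith
  -- combine
  have hmain : B⁻¹ * M - δΨ - δplus ≤ (μ Aᶜ).toReal * (B * S + N) := by
    have hMle' : B⁻¹ * M ≤ ∫ x, ‖g x‖ ∂μ := by
      have := mul_le_mul_of_nonneg_left hMle (le_of_lt (inv_pos.2 hBpos))
      rwa [← mul_assoc, inv_mul_cancel₀ (ne_of_gt hBpos), one_mul] at this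
    linarith
  have hcompl : (μ Aᶜ).toReal = 1 - (μ A).toReal := by
    have := measure_compl hAmeas (measure_ne_top μ A)
    rw [this, measure_univ]
    rw [ENNReal.toReal_sub_of_le prob_le_one ENNReal.one_ne_top]
    simp
  constructor
  · have h3 : (B⁻¹ * M - δΨ - δplus) / (B * S + N) ≤ (μ Aᶜ).toReal :=
      (div_le_iff₀ hDpos).2 hmain
    rw [hcompl] at h3
    linarith
  · have : 0 < (B⁻¹ * M - δΨ - δplus) / (B * S + N) := div_pos hnum hDpos
    linarith
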